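/- Let A be a Noetherian integrally closed domain with fraction field K, and let B be a finitely generated torsion-free A-module of rank 1, i.e. dim_K(K ⊗_A B) = 1. For n ≥ 0 set B^{[n]} := (B^{⊗n})^∨∨ (tensor powers over A). Then for all m, n ≥ 0 the natural map B^{[n]} ⊗_A B^{[m]} → B^{[n+m]} (induced by double dualization from the identification B^{⊗n} ⊗_A B^{⊗m} = B^{⊗(n+m)}) induces an isomorphism (B^{[n]} ⊗_A B^{[m]})^∨∨ ≅ B^{[n+m]}. -/

import Mathlib

open TensorProduct Module

/-- The canonical map `X^∨∨ ⊗_A Y^∨∨ → (X ⊗_A Y)^∨∨`, sending `F ⊗ G` to the functional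
`φ ↦ F (x ↦ G (y ↦ φ (x ⊗ y)))`.  On images of the evaluation maps it sends
`eval x ⊗ eval y` to `eval (x ⊗ y)`. -/
noncomputable def doubleDualTensor (A X Y : Type*) [CommRing A]
    [AddCommGroup X] [Module A X] [AddCommGroup Y] [Module A Y] :
    (Module.Dual A (Module.Dual A X)) ⊗[A] (Module.Dual A (Module.Dual A Y)) →ₗ[A]
      Module.Dual A (Module.Dual A (X ⊗[A] Y)) :=
  TensorProduct.lift
    ((((LinearMap.llcomp A (Module.Dual A (X ⊗[A] Y)) (Module.Dual A X) A).flip).comp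
        ((LinearMap.lcomp A (Module.Dual A X) (TensorProduct.lcurry (RingHom.id A) X Y A)).comp
          (LinearMap.llcomp A X (Module.Dual A Y) A))).flip)

section Aux

variable {A : Type*} [CommRing A] [IsDomain A] {M : Type*} [AddCommGroup M] [Module A M]

/-- Over a domain, if every element of `M` is proportional to a pivot `x₀` (up to a nonzero
scalar), then the cokernel of the evaluation map `M → M^∨∨` is torsion. -/
lemma exists_smul_eval_eq (x₀ : M) (hP : ∀ t : M, ∃ a p : A, a ≠ 0 ∧ a • t = p • x₀)
    (F : Dual A (Dual A M)) :
    ∃ (a : A) (x : M), a ≠ 0 ∧ a • F = Dual.eval A M x := by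
  by_cases h : ∀ f : Dual A M, f = 0
  · refine ⟨1, 0, one_ne_zero, ?_⟩
    ext f
    simp [h f]
  push_neg at h
  obtain ⟨f₀, hf₀⟩ := h
  -- any functional vanishing at x₀ vanishes
  have hvan : ∀ f : Dual A M, f x₀ = 0 → f = 0 := by
    intro f hf
    ext x
    obtain ⟨a, p, ha, hx⟩ := hP x
    have : a * f x = p * f x₀ := by
      rw [← smul_eq_mul, ← smul_eq_mul, ← map_smul, ← map_smul, hx]
    rw [hf, mul_zero] at this
    rcases mul_eq_zero.mp this with h' | h'
    · exact absurd h' ha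
    · simpa using h'
  have hx₀ : f₀ x₀ ≠ 0 := fun hc => hf₀ (hvan f₀ hc)
  -- key symmetry
  have key : ∀ f g : Dual A M, ∀ x : M, f x₀ * g x = g x₀ * f x := by
    intro f g x
    obtain ⟨a, p, ha, hx⟩ := hP x
    have hf : a * f x = p * f x₀ := by
      rw [← smul_eq_mul, ← smul_eq_mul, ← map_smul, ← map_smul, hx]
    have hg : a * g x = p * g x₀ := by
      rw [← smul_eq_mul, ← smul_eq_mul, ← map_smul, ← map_smul, hx]
    apply mul_left_cancel₀ ha
    calc a * (f x₀ * g x) = f x₀ * (a * g x) := by ring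
    _ = f x₀ * (p * g x₀) := by rw [hg]
    _ = g x₀ * (p * f x₀) := by ring
    _ = g x₀ * (a * f x) := by rw [hf]
    _ = a * (g x₀ * f x) := by ring
  refine ⟨f₀ x₀, F f₀ • x₀, hx₀, ?_⟩
  ext f
  have : f x₀ • f₀ = f₀ x₀ • f := by
    ext x
    simpa [smul_eq_mul] using key f f₀ x
  have := congrArg F this
  rw [map_smul, map_smul] at this
  simp only [LinearMap.smul_apply, Dual.eval_apply, map_smul, smul_eq_mul] at this ⊢
  rw [← this]
  ring

/-- Over a domain, if the cokernel of `eval : M → M^∨∨` is torsion, then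
`eval : M^∨ → M^∨∨∨` is bijective. -/
lemma bijective_eval_dual
    (hB : ∀ F : Dual A (Dual A M), ∃ (a : A) (x : M), a ≠ 0 ∧ a • F = Dual.eval A M x) :
    Function.Bijective (Dual.eval A (Dual A M)) := by
  constructor
  · intro f₁ f₂ hf
    ext x
    have := congrArg (fun G => G (Dual.eval A M x)) hf
    simpa using this
  · intro H
    refine ⟨H ∘ₗ Dual.eval A M, ?_⟩
    ext F
    obtain ⟨a, x, ha, hax⟩ := hB F
    apply mul_left_cancel₀ ha
    have h1 : (a • F) (H ∘ₗ Dual.eval A M) = (Dual.eval A M x) (H ∘ₗ Dual.eval A M) := by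
      rw [hax]
    have h2 : H (a • F) = H (Dual.eval A M x) := by rw [hax]
    simp only [LinearMap.smul_apply, smul_eq_mul, Dual.eval_apply, LinearMap.coe_comp,
      Function.comp_apply, map_smul] at h1 h2 ⊢
    exact h1.trans h2.symm

/-- Proportionality to a pivot is preserved by tensor products. -/
lemma hP_tmul {N : Type*} [AddCommGroup N] [Module A N] (x₀ : M) (y₀ : N)
    (hM : ∀ t : M, ∃ a p : A, a ≠ 0 ∧ a • t = p • x₀)
    (hN : ∀ t : N, ∃ a p : A, a ≠ 0 ∧ a • t = p • y₀) :
    ∀ t : M ⊗[A] N, ∃ a p : A, a ≠ 0 ∧ a • t = p • (x₀ ⊗ₜ[A] y₀) := by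
  intro t
  induction t using TensorProduct.induction_on with
  | zero => exact ⟨1, 0, one_ne_zero, by simp⟩
  | tmul x y =>
      obtain ⟨a, p, ha, hx⟩ := hM x
      obtain ⟨b, q, hb, hy⟩ := hN y
      refine ⟨a * b, p * q, mul_ne_zero ha hb, ?_⟩
      rw [← TensorProduct.smul_tmul_smul, hx, hy, TensorProduct.smul_tmul_smul]
  | add u v hu hv =>
      obtain ⟨a, p, ha, h1⟩ := hu
      obtain ⟨b, q, hb, h2⟩ := hv
      refine ⟨a * b, b * p + a * q, mul_ne_zero ha hb, ?_⟩
      rw [smul_add, add_smul, mul_comm a b, mul_smul, h1, mul_comm b a, mul_smul, h2,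
        smul_smul, smul_smul]

/-- Proportionality to a pivot is preserved by tensor powers. -/
lemma hP_tpow (x₀ : M) (hM : ∀ t : M, ∃ a p : A, a ≠ 0 ∧ a • t = p • x₀) (n : ℕ) :
    ∀ t : (⨂[A]^n M), ∃ a p : A, a ≠ 0 ∧
      a • t = p • (PiTensorProduct.tprod A (fun _ : Fin n => x₀)) := by
  intro t
  induction t using PiTensorProduct.induction_on with
  | smul_tprod r f =>
      choose a p ha hf using fun i => hM (f i)
      refine ⟨∏ i, a i, r * ∏ i, p i,
        Finset.prod_ne_zero_iff.mpr (fun i _ => ha i), ?_⟩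
      have h1 : (PiTensorProduct.tprod A) (fun i => a i • f i)
          = (∏ i, a i) • PiTensorProduct.tprod A f :=
        MultilinearMap.map_smul_univ _ a f
      have h2 : (PiTensorProduct.tprod A) (fun i => p i • x₀)
          = (∏ i, p i) • PiTensorProduct.tprod A (fun _ : Fin n => x₀) :=
        MultilinearMap.map_smul_univ _ p _
      calc (∏ i, a i) • (r • PiTensorProduct.tprod A f)
          = r • ((∏ i, a i) • PiTensorProduct.tprod A f) := smul_comm _ _ _
        _ = r • (PiTensorProduct.tprod A) (fun i => a i • f i) := by rw [h1]
        _ = r • (PiTensorProduct.tprod A) (fun i => p i • x₀) := by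
            rw [funext hf]
        _ = (r * ∏ i, p i) • PiTensorProduct.tprod A (fun _ : Fin n => x₀) := by
            rw [h2, smul_smul]
  | add u v hu hv =>
      obtain ⟨a, p, ha, h1⟩ := hu
      obtain ⟨b, q, hb, h2⟩ := hv
      refine ⟨a * b, b * p + a * q, mul_ne_zero ha hb, ?_⟩
      rw [smul_add, add_smul, mul_comm a b, mul_smul, h1, mul_comm b a, mul_smul, h2,
        smul_smul, smul_smul]

end Aux

/-- A finitely generated torsion-free module of rank one over a domain has all its elements
pairwise proportional (with nonzero denominators). -/
lemma exists_pivot (A K B : Type*) [CommRing A] [IsDomain A]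
    [Field K] [Algebra A K] [IsFractionRing A K]
    [AddCommGroup B] [Module A B] [Module.Finite A B] [NoZeroSMulDivisors A B]
    (hrank : Module.finrank K (K ⊗[A] B) = 1) :
    ∃ b₀ : B, ∀ t : B, ∃ a p : A, a ≠ 0 ∧ a • t = p • b₀ := by
  haveI : IsLocalizedModule (nonZeroDivisors A) (TensorProduct.mk A K B 1) :=
    (isLocalizedModule_iff_isBaseChange (nonZeroDivisors A) K _).mpr
      (TensorProduct.isBaseChange A B K)
  have hinj : ∀ t t' : B, (1 : K) ⊗ₜ[A] t = (1 : K) ⊗ₜ[A] t' → t = t' := by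
    intro t t' h
    obtain ⟨c, hc⟩ := IsLocalizedModule.exists_of_eq
      (S := nonZeroDivisors A) (f := TensorProduct.mk A K B 1) h
    have hc0 : (c : A) ≠ 0 := nonZeroDivisors.ne_zero c.2
    have := sub_eq_zero.mpr hc
    rw [← smul_sub] at this
    rcases smul_eq_zero.mp this with h' | h'
    · exact absurd h' hc0
    · exact sub_eq_zero.mp h'
  have hnt : ∃ b₀ : B, (1 : K) ⊗ₜ[A] b₀ ≠ (0 : K ⊗[A] B) := by
    by_contra hc
    push_neg at hc
    have hzero : ∀ b : B, b = 0 := fun b => hinj b 0 (by rw [hc b, hc 0])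
    have : Subsingleton B := ⟨fun x y => by rw [hzero x, hzero y]⟩
    have : Subsingleton (K ⊗[A] B) := by
      constructor
      intro u v
      have hz : ∀ w : K ⊗[A] B, w = 0 := by
        intro w
        induction w using TensorProduct.induction_on with
        | zero => rfl
        | tmul k b => rw [hzero b, TensorProduct.tmul_zero]
        | add u v hu hv => rw [hu, hv, add_zero]
      rw [hz u, hz v]
    rw [Module.finrank_zero_of_subsingleton] at hrank
    exact zero_ne_one hrank
  obtain ⟨b₀, hb₀⟩ := hnt
  have hspan : ∀ w : K ⊗[A] B, ∃ k : K, w = k • ((1 : K) ⊗ₜ[A] b₀) := by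
    have h1 : Submodule.span K {(1 : K) ⊗ₜ[A] b₀} = ⊤ :=
      Submodule.eq_top_of_finrank_eq
        (by rw [finrank_span_singleton hb₀, hrank])
    intro w
    have hw : w ∈ Submodule.span K {(1 : K) ⊗ₜ[A] b₀} := h1 ▸ Submodule.mem_top
    obtain ⟨k, hk⟩ := Submodule.mem_span_singleton.mp hw
    exact ⟨k, hk.symm⟩
  refine ⟨b₀, fun t => ?_⟩
  obtain ⟨k, hk⟩ := hspan ((1 : K) ⊗ₜ[A] t)
  obtain ⟨⟨p, q⟩, hpq⟩ := IsLocalization.surj (nonZeroDivisors A) k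
  refine ⟨(q : A), p, nonZeroDivisors.ne_zero q.2, ?_⟩
  apply hinj
  rw [TensorProduct.tmul_smul, TensorProduct.tmul_smul,
    ← algebraMap_smul K (q : A), ← algebraMap_smul K p, hk, smul_smul, ← hpq]
  ring_nf

/-- Let `A` be a Noetherian integrally closed domain with fraction field `K`,
and let `B` be a finitely generated torsion-free `A`-module of rank `1`.  With
`B^{[n]} := (B^{⊗n})^∨∨`, for all `m, n ≥ 0` the natural map
`B^{[n]} ⊗_A B^{[m]} → B^{[n+m]}` (induced by double dualization from
`B^{⊗n} ⊗ B^{⊗m} = B^{⊗(n+m)}`) induces an isomorphism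
`(B^{[n]} ⊗_A B^{[m]})^∨∨ ≅ B^{[n+m]}`. -/
theorem stmt_6 (A K B : Type*) [CommRing A] [IsDomain A] [IsNoetherianRing A]
    [IsIntegrallyClosed A] [Field K] [Algebra A K] [IsFractionRing A K]
    [AddCommGroup B] [Module A B] [Module.Finite A B] [NoZeroSMulDivisors A B]
    (hrank : Module.finrank K (K ⊗[A] B) = 1) (n m : ℕ) :
    ∃ e : Module.Dual A (Module.Dual A
        ((Module.Dual A (Module.Dual A (⨂[A]^n B))) ⊗[A]
          (Module.Dual A (Module.Dual A (⨂[A]^m B))))) ≃ₗ[A]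
        Module.Dual A (Module.Dual A (⨂[A]^(n + m) B)),
      (e : _ →ₗ[A] _) ∘ₗ
          Module.Dual.eval A ((Module.Dual A (Module.Dual A (⨂[A]^n B))) ⊗[A]
            (Module.Dual A (Module.Dual A (⨂[A]^m B)))) =
        ((TensorPower.mulEquiv (R := A) (M := B) (n := n) (m := m)).dualMap.dualMap
            : Module.Dual A (Module.Dual A ((⨂[A]^n B) ⊗[A] (⨂[A]^m B))) ≃ₗ[A]
              Module.Dual A (Module.Dual A (⨂[A]^(n + m) B))).toLinearMap ∘ₗ
          doubleDualTensor A (⨂[A]^n B) (⨂[A]^m B) := by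
  classical
  obtain ⟨b₀, hb⟩ := exists_pivot A K B hrank
  set X := (⨂[A]^n B)
  set Y := (⨂[A]^m B)
  set Z := (⨂[A]^(n + m) B)
  -- pivots and proportionality
  have hPX := hP_tpow b₀ hb n
  have hPY := hP_tpow b₀ hb m
  have hPZ := hP_tpow b₀ hb (n + m)
  have hPXY := hP_tmul _ _ hPX hPY
  -- torsion cokernels of evaluation
  have cokX := exists_smul_eval_eq _ hPX
  have cokY := exists_smul_eval_eq _ hPY
  have cokZ := exists_smul_eval_eq _ hPZ
  have hPXY' : ∀ t : X ⊗[A] Y, ∃ a p : A, a ≠ 0 ∧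
      a • t = p • ((PiTensorProduct.tprod A fun _ : Fin n => b₀) ⊗ₜ[A]
        (PiTensorProduct.tprod A fun _ : Fin m => b₀)) := fun t => hPXY t
  have cokXY := exists_smul_eval_eq (A := A) (M := X ⊗[A] Y) _ hPXY'
  set e₀ : (X ⊗[A] Y) ≃ₗ[A] Z := TensorPower.mulEquiv (R := A) (M := B) (n := n) (m := m)
  set Q := Dual A (Dual A Z)
  set P := (Dual A (Dual A X)) ⊗[A] (Dual A (Dual A Y))
  set F : P →ₗ[A] Q := e₀.dualMap.dualMap.toLinearMap ∘ₗ doubleDualTensor A X Y with hF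
  set g : (X ⊗[A] Y) →ₗ[A] P :=
    TensorProduct.map (Dual.eval A X) (Dual.eval A Y) with hg
  -- Claim C
  have hdd : doubleDualTensor A X Y ∘ₗ g = Dual.eval A (X ⊗[A] Y) := by
    apply TensorProduct.ext'
    intro x y
    ext φ
    rfl
  have claimC : F ∘ₗ g = e₀.dualMap.dualMap.toLinearMap ∘ₗ Dual.eval A (X ⊗[A] Y) := by
    rw [hF, LinearMap.comp_assoc, hdd]
  -- bijectivity of (eval_{X⊗Y}).dualMap
  have hevXY : Function.Bijective (Dual.eval A (X ⊗[A] Y)).dualMap := by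
    constructor
    · intro h1 h2 hh
      ext G
      obtain ⟨a, w, ha, haw⟩ := cokXY G
      apply mul_left_cancel₀ ha
      have e1 : h1 (a • G) = h2 (a • G) := by
        rw [haw]
        exact congrArg (fun t => t w) hh
      simpa [smul_eq_mul] using e1
    · intro f
      refine ⟨Dual.eval A (Dual A (X ⊗[A] Y)) f, ?_⟩
      ext w
      rfl
  -- bijectivity of the dual of the double-dual equivalence
  have hee : Function.Bijective (e₀.dualMap.dualMap.toLinearMap.dualMap) :=
    e₀.dualMap.dualMap.dualMap.bijective
  -- injectivity of g.dualMap
  have hginj : Function.Injective g.dualMap := by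
    intro h1 h2 hh
    apply TensorProduct.ext'
    intro G H
    obtain ⟨a, x, ha, hax⟩ := cokX G
    obtain ⟨b, y, hbb, hby⟩ := cokY H
    apply mul_left_cancel₀ (mul_ne_zero ha hbb)
    have key : ∀ h : Dual A P, (a * b) • h (G ⊗ₜ[A] H) = (g.dualMap h) (x ⊗ₜ[A] y) := by
      intro h
      have : (a • G) ⊗ₜ[A] (b • H) = (a * b) • (G ⊗ₜ[A] H) :=
        TensorProduct.smul_tmul_smul a b G H
      rw [← map_smul, ← this, hax, hby]
      rfl
    have k1 := key h1
    have k2 := key h2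
    rw [hh] at k1
    simp only [smul_eq_mul] at k1 k2
    rw [k1, k2]
  -- dualized claim C
  have dualC : g.dualMap ∘ₗ F.dualMap
      = (Dual.eval A (X ⊗[A] Y)).dualMap ∘ₗ e₀.dualMap.dualMap.toLinearMap.dualMap := by
    rw [LinearMap.dualMap_comp_dualMap, claimC, ← LinearMap.dualMap_comp_dualMap]
  have hRbij : Function.Bijective
      ((Dual.eval A (X ⊗[A] Y)).dualMap ∘ₗ e₀.dualMap.dualMap.toLinearMap.dualMap) :=
    hevXY.comp hee
  -- bijectivity of F.dualMap
  have hFd : Function.Bijective F.dualMap := by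
    constructor
    · intro u v huv
      have : (g.dualMap ∘ₗ F.dualMap) u = (g.dualMap ∘ₗ F.dualMap) v := by
        simp only [LinearMap.coe_comp, Function.comp_apply, huv]
      rw [dualC] at this
      exact hRbij.injective this
    · intro h
      obtain ⟨u, hu⟩ := hRbij.surjective (g.dualMap h)
      refine ⟨u, hginj ?_⟩
      rw [← LinearMap.comp_apply, dualC]
      exact hu
  -- eval on Q is bijective
  have hevZd : Function.Bijective (Dual.eval A (Dual A Z)) := bijective_eval_dual cokZ
  have hevQ : Function.Bijective (Dual.eval A Q) := by
    apply bijective_eval_dual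
    intro G
    obtain ⟨x, hx⟩ := hevZd.surjective G
    exact ⟨1, x, one_ne_zero, by rw [one_smul, hx]⟩
  -- assemble the equivalence
  set Fd : Dual A Q ≃ₗ[A] Dual A P := LinearEquiv.ofBijective F.dualMap hFd
  set e : (Dual A (Dual A P)) ≃ₗ[A] Q :=
    Fd.dualMap.trans (LinearEquiv.ofBijective (Dual.eval A Q) hevQ).symm with he
  refine ⟨e, ?_⟩
  have hfinal : (e : Dual A (Dual A P) →ₗ[A] Q) ∘ₗ Dual.eval A P = F := by
    apply LinearMap.ext
    intro u
    have hnat : Fd.dualMap (Dual.eval A P u) = Dual.eval A Q (F u) := by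
      apply LinearMap.ext
      intro q
      rfl
    simp only [he, LinearMap.coe_comp, LinearEquiv.coe_coe, Function.comp_apply,
      LinearEquiv.trans_apply, hnat]
    have : (LinearEquiv.ofBijective (Dual.eval A Q) hevQ) (F u) = Dual.eval A Q (F u) := rfl
    rw [← this, LinearEquiv.symm_apply_apply]
  exact hfinal
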